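/- Fix A > 0, a, b, c ∈ ℝ, and define, for T > 0 and v > max(b, c), the Helmholtz free energy f(T, v) = a/(T(v − c)) + (3/2) T [1 − ln(T/A) − (2/3) ln(v − b)]. Then for all such (T, v): (i) f(T,v) = u(T,v) − T·s(T,v), where u(T, v) = (3/2)T + 2a/(T(v − c)) and s(T, v) = a/(T²(v − c)) + ln(v − b) + (3/2) ln(T/A); (ii) ∂f/∂v(T,v) = −P(T,v), where P(T, v) = T/(v − b) + a/(T(v − c)²); and (iii) ∂f/∂T(T,v) = −s(T,v). -/

import Mathlib

/-- The Helmholtz free energy of the Clausius gas,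
f = a/(T(v−c)) + (3/2)T[1 − ln(T/A) − (2/3)ln(v−b)], satisfies f = u − Ts,
∂f/∂v = −P and ∂f/∂T = −s. -/
theorem stmt_17 (A a b c : ℝ) (hA : 0 < A)
    (f u s P : ℝ → ℝ → ℝ)
    (hf : ∀ T v, f T v = a / (T * (v - c))
      + (3/2) * T * (1 - Real.log (T / A) - (2/3) * Real.log (v - b)))
    (hu : ∀ T v, u T v = (3/2) * T + 2 * a / (T * (v - c)))
    (hs : ∀ T v, s T v = a / (T ^ 2 * (v - c)) + Real.log (v - b) + (3/2) * Real.log (T / A))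
    (hP : ∀ T v, P T v = T / (v - b) + a / (T * (v - c) ^ 2)) :
    ∀ T v : ℝ, 0 < T → max b c < v →
      f T v = u T v - T * s T v ∧
      deriv (fun v' => f T v') v = -(P T v) ∧
      deriv (fun T' => f T' v) T = -(s T v) := by
  intro T v hT hv
  have hvb : (0:ℝ) < v - b := by have := lt_of_le_of_lt (le_max_left b c) hv; linarith
  have hvc : (0:ℝ) < v - c := by have := lt_of_le_of_lt (le_max_right b c) hv; linarith
  have hT0 : T ≠ 0 := ne_of_gt hT
  have hA0 : A ≠ 0 := ne_of_gt hA
  have hvb0 : v - b ≠ 0 := ne_of_gt hvb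
  have hvc0 : v - c ≠ 0 := ne_of_gt hvc
  have hTvc : T * (v - c) ≠ 0 := mul_ne_zero hT0 hvc0
  have hTA : T / A ≠ 0 := div_ne_zero hT0 hA0
  refine ⟨?_, ?_, ?_⟩
  · rw [hf, hu, hs]; field_simp; ring
  · -- derivative in v
    have heq : (fun v' => f T v') = fun v' => a / (T * (v' - c))
        + (3/2) * T * (1 - Real.log (T / A) - (2/3) * Real.log (v' - b)) :=
      funext fun v' => hf T v'
    rw [heq]
    have h1 : HasDerivAt (fun v' : ℝ => T * (v' - c)) (T * 1) v :=
      ((hasDerivAt_id v).sub_const c).const_mul T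
    have h2 : HasDerivAt (fun v' : ℝ => a / (T * (v' - c)))
        ((0 * (T * (v - c)) - a * (T * 1)) / (T * (v - c)) ^ 2) v :=
      (hasDerivAt_const v a).div h1 hTvc
    have h3 : HasDerivAt (fun v' : ℝ => Real.log (v' - b)) (1 / (v - b)) v := by
      simpa using ((hasDerivAt_id v).sub_const b).log hvb0
    have h4 : HasDerivAt (fun v' : ℝ =>
        (3/2) * T * (1 - Real.log (T / A) - (2/3) * Real.log (v' - b)))
        ((3/2) * T * (0 - 0 - (2/3) * (1 / (v - b)))) v := by
      exact (((hasDerivAt_const v (1:ℝ)).sub (hasDerivAt_const v (Real.log (T / A)))).sub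
        (h3.const_mul (2/3))).const_mul ((3/2) * T)
    have h5 := (h2.add h4).deriv
    simp only [Pi.add_def] at h5
    rw [h5, hP]
    field_simp
    ring
  · -- derivative in T
    have heq : (fun T' => f T' v) = fun T' => a / (T' * (v - c))
        + (3/2) * T' * (1 - Real.log (T' / A) - (2/3) * Real.log (v - b)) :=
      funext fun T' => hf T' v
    rw [heq]
    have h1 : HasDerivAt (fun T' : ℝ => T' * (v - c)) (1 * (v - c)) T :=
      (hasDerivAt_id T).mul_const (v - c)
    have h2 : HasDerivAt (fun T' : ℝ => a / (T' * (v - c)))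
        ((0 * (T * (v - c)) - a * (1 * (v - c))) / (T * (v - c)) ^ 2) T :=
      (hasDerivAt_const T a).div h1 hTvc
    have h3 : HasDerivAt (fun T' : ℝ => Real.log (T' / A)) ((1 / A) / (T / A)) T :=
      ((hasDerivAt_id T).div_const A).log hTA
    have h4 : HasDerivAt (fun T' : ℝ =>
        1 - Real.log (T' / A) - (2/3) * Real.log (v - b))
        (0 - (1 / A) / (T / A) - 0) T :=
      ((hasDerivAt_const T (1:ℝ)).sub h3).sub (hasDerivAt_const T _)
    have h5 : HasDerivAt (fun T' : ℝ => (3/2) * T') (3/2) T := by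
      simpa using (hasDerivAt_id T).const_mul (3/2 : ℝ)
    have h6 := (h5.mul h4)
    have h7 := (h2.add h6).deriv
    simp only [Pi.add_def, Pi.mul_def] at h7
    rw [h7, hs]
    field_simp
    ring
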